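/- (Observer certificate for the Moore–Greitzer jet engine model.) Let A(x) = [[-3φ - (3/2)φ², -1], [1, 0]] for x = (φ, ψ) ∈ ℝ² and C = [0, 1] (a 1×2 matrix, corresponding to measuring ψ only). There exist a symmetric positive definite 2×2 real matrix W with 0.1·I ⪯ W ⪯ 1.3·I and a polynomial function ρ : ℝ² → ℝ with ρ(x) ≥ 0 for all x, such that for all x ∈ ℝ²: A(x)ᵀ·W + W·A(x) - ρ(x)·Cᵀ·C ⪯ -0.2·W. (This is the pointwise observer LMI with contraction rate λ = 0.1 for the Moore–Greitzer surge dynamics φ̇ = -ψ - (3/2)φ² - (1/2)φ³, ψ̇ = φ + u, whose Jacobian is A(x).) -/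

import Mathlib

open Matrix

/-- The Jacobian of the Moore–Greitzer surge dynamics. -/
noncomputable def mooreGreitzerA (x : Fin 2 → ℝ) : Matrix (Fin 2) (Fin 2) ℝ :=
  !![-3 * x 0 - (3 / 2) * (x 0) ^ 2, -1; 1, 0]

/-- The output matrix of the Moore–Greitzer surge dynamics (measuring `ψ` only). -/
noncomputable def mooreGreitzerC : Matrix (Fin 1) (Fin 2) ℝ := !![0, 1]

lemma psd2 (a b d : ℝ) (ha : 0 ≤ a) (hd : 0 ≤ d) (hdet : b ^ 2 ≤ a * d) :
    (!![a, b; b, d] : Matrix (Fin 2) (Fin 2) ℝ).PosSemidef := by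
  rw [Matrix.posSemidef_iff_dotProduct_mulVec]
  constructor
  · ext i j
    fin_cases i <;> fin_cases j <;> simp [Matrix.conjTranspose_apply]
  · intro v
    have e00 : (!![a, b; b, d] : Matrix (Fin 2) (Fin 2) ℝ) 0 0 = a := rfl
    have e01 : (!![a, b; b, d] : Matrix (Fin 2) (Fin 2) ℝ) 0 1 = b := rfl
    have e10 : (!![a, b; b, d] : Matrix (Fin 2) (Fin 2) ℝ) 1 0 = b := rfl
    have e11 : (!![a, b; b, d] : Matrix (Fin 2) (Fin 2) ℝ) 1 1 = d := rfl
    simp only [dotProduct, Matrix.mulVec, Fin.sum_univ_two, RCLike.star_def,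
      star_trivial, Pi.star_apply, e00, e01, e10, e11]
    rcases eq_or_lt_of_le ha with h0 | hpos
    · have hb : b = 0 := by nlinarith [sq_nonneg b]
      rw [hb, ← h0]
      nlinarith [mul_nonneg hd (sq_nonneg (v 1))]
    · nlinarith [sq_nonneg (a * v 0 + b * v 1),
        mul_nonneg (sub_nonneg.mpr hdet) (sq_nonneg (v 1))]

lemma pd2 (a b d : ℝ) (ha : 0 < a) (hdet : b ^ 2 < a * d) :
    (!![a, b; b, d] : Matrix (Fin 2) (Fin 2) ℝ).PosDef := by
  rw [Matrix.posDef_iff_dotProduct_mulVec]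
  constructor
  · ext i j
    fin_cases i <;> fin_cases j <;> simp [Matrix.conjTranspose_apply]
  · intro v hv
    have hv' : v 0 ≠ 0 ∨ v 1 ≠ 0 := by
      by_contra h
      push_neg at h
      apply hv
      ext i
      fin_cases i <;> simp [h.1, h.2]
    have e00 : (!![a, b; b, d] : Matrix (Fin 2) (Fin 2) ℝ) 0 0 = a := rfl
    have e01 : (!![a, b; b, d] : Matrix (Fin 2) (Fin 2) ℝ) 0 1 = b := rfl
    have e10 : (!![a, b; b, d] : Matrix (Fin 2) (Fin 2) ℝ) 1 0 = b := rfl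
    have e11 : (!![a, b; b, d] : Matrix (Fin 2) (Fin 2) ℝ) 1 1 = d := rfl
    simp only [dotProduct, Matrix.mulVec, Fin.sum_univ_two, RCLike.star_def,
      star_trivial, Pi.star_apply, e00, e01, e10, e11]
    by_cases h1 : v 1 = 0
    · have h0 : v 0 ≠ 0 := by
        rcases hv' with h | h
        · exact h
        · exact absurd h1 h
      have h2 : 0 < v 0 ^ 2 := pow_two_pos_of_ne_zero h0
      rw [h1]
      nlinarith [mul_pos ha h2]
    · have h2 : 0 < v 1 ^ 2 := pow_two_pos_of_ne_zero h1
      nlinarith [sq_nonneg (a * v 0 + b * v 1),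
        mul_pos (sub_pos.mpr hdet) h2]

theorem mooreGreitzer_observer_certificate :
    ∃ (W : Matrix (Fin 2) (Fin 2) ℝ) (ρ : MvPolynomial (Fin 2) ℝ),
      W.PosDef ∧
      (W - (0.1 : ℝ) • (1 : Matrix (Fin 2) (Fin 2) ℝ)).PosSemidef ∧
      ((1.3 : ℝ) • (1 : Matrix (Fin 2) (Fin 2) ℝ) - W).PosSemidef ∧
      (∀ x : Fin 2 → ℝ, 0 ≤ MvPolynomial.eval x ρ) ∧
      (∀ x : Fin 2 → ℝ,
        ((-(0.2 : ℝ)) • W -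
          ((mooreGreitzerA x)ᵀ * W + W * mooreGreitzerA x -
            MvPolynomial.eval x ρ • (mooreGreitzerCᵀ * mooreGreitzerC))).PosSemidef) := by
  refine ⟨!![(0.2 : ℝ), -0.33; -0.33, 1.2],
    MvPolynomial.C 0.9 + MvPolynomial.C 50 *
      (MvPolynomial.C 0.495 * MvPolynomial.X 0 ^ 2 +
       MvPolynomial.C 0.99 * MvPolynomial.X 0 + MvPolynomial.C 0.934) ^ 2,
    ?_, ?_, ?_, ?_, ?_⟩
  · exact pd2 _ _ _ (by norm_num) (by norm_num)
  · have h : (!![(0.2 : ℝ), -0.33; -0.33, 1.2] - (0.1 : ℝ) • (1 : Matrix (Fin 2) (Fin 2) ℝ))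
        = !![(0.1 : ℝ), -0.33; -0.33, 1.1] := by
      ext i j
      fin_cases i <;> fin_cases j <;>
        simp [Matrix.smul_apply, Matrix.one_apply] <;> norm_num
    rw [h]
    exact psd2 _ _ _ (by norm_num) (by norm_num) (by norm_num)
  · have h : ((1.3 : ℝ) • (1 : Matrix (Fin 2) (Fin 2) ℝ) - !![(0.2 : ℝ), -0.33; -0.33, 1.2])
        = !![(1.1 : ℝ), 0.33; 0.33, 0.1] := by
      ext i j
      fin_cases i <;> fin_cases j <;>
        simp [Matrix.smul_apply, Matrix.one_apply] <;> norm_num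
    rw [h]
    exact psd2 _ _ _ (by norm_num) (by norm_num) (by norm_num)
  · intro x
    simp only [map_add, _root_.map_mul, map_pow, MvPolynomial.eval_C, MvPolynomial.eval_X]
    nlinarith [sq_nonneg (0.495 * x 0 ^ 2 + 0.99 * x 0 + 0.934)]
  · intro x
    set φ := x 0 with hφ
    set t : ℝ := 0.495 * φ ^ 2 + 0.99 * φ + 0.934 with ht
    have hρ : MvPolynomial.eval x (MvPolynomial.C 0.9 + MvPolynomial.C 50 *
        (MvPolynomial.C 0.495 * MvPolynomial.X 0 ^ 2 +
         MvPolynomial.C 0.99 * MvPolynomial.X 0 + MvPolynomial.C (0.934 : ℝ)) ^ 2)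
        = 0.9 + 50 * t ^ 2 := by
      simp only [map_add, _root_.map_mul, map_pow, MvPolynomial.eval_C, MvPolynomial.eval_X,
        ht, hφ]
    have hC : mooreGreitzerCᵀ * mooreGreitzerC = !![(0 : ℝ), 0; 0, 1] := by
      ext i j
      fin_cases i <;> fin_cases j <;>
        simp [mooreGreitzerC, Matrix.mul_apply, Fin.sum_univ_one, Matrix.transpose_apply]
    rw [hρ, hC]
    have hAT : (mooreGreitzerA x)ᵀ = !![-3 * φ - (3 / 2) * φ ^ 2, 1; -1, 0] := by
      ext i j
      fin_cases i <;> fin_cases j <;> simp [mooreGreitzerA, hφ]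
    rw [hAT]
    have h : ((-(0.2 : ℝ)) • (!![(0.2 : ℝ), -0.33; -0.33, 1.2]) -
          (!![-3 * φ - (3 / 2) * φ ^ 2, 1; -1, 0] * !![(0.2 : ℝ), -0.33; -0.33, 1.2] +
            !![(0.2 : ℝ), -0.33; -0.33, 1.2] * mooreGreitzerA x -
            (0.9 + 50 * t ^ 2) • (!![(0 : ℝ), 0; 0, 1])))
        = !![0.6 * (φ + 1) ^ 2 + 0.02, -t; -t, 50 * t ^ 2] := by
      ext i j
      fin_cases i <;> fin_cases j <;>
        simp [mooreGreitzerA, Matrix.mul_apply, Fin.sum_univ_two,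
          Matrix.smul_apply, Matrix.transpose_apply, ht, hφ] <;> ring
    rw [h]
    refine psd2 _ _ _ (by positivity) (by positivity) ?_
    nlinarith [sq_nonneg t, mul_nonneg (sq_nonneg t) (sq_nonneg (φ + 1))]
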